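/- Let k ≥ 2, μ > 0, p > 1 with μ/k < 2/(p-1), i.e. p < 1 + 2k/μ. Let c > 0 and define, for r > 0 small enough that c·r^{μ(p-1)/k} - r²/(2k/(p-1) - μ) > 0, u(r) = (c·r^{μ(p-1)/k} - r²/(2k/(p-1) - μ))^{-1/(p-1)}. Then u is positive, satisfies the first-order ODE k·u'(r)/r + μ·u(r)/r² = u(r)^p, and u(r)·r^{μ/k} → c^{-1/(p-1)} as r → 0⁺. -/

import Mathlib

open Set Filter

theorem stmt11 (k : ℕ) (hk : 2 ≤ k)
    (μ p : ℝ) (hμ : 0 < μ) (hp : 1 < p) (hsub : μ / (k:ℝ) < 2 / (p - 1))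
    (c : ℝ) (hc : 0 < c)
    (d u : ℝ → ℝ)
    (hd : ∀ r : ℝ, d r = c * r ^ (μ * (p - 1) / (k:ℝ)) - r ^ (2:ℝ) / (2 * (k:ℝ) / (p - 1) - μ))
    (hu : ∀ r : ℝ, u r = d r ^ (-(1 / (p - 1)))) :
    (∃ r₁ ∈ Ioo (0:ℝ) 1, ∀ r ∈ Ioo (0:ℝ) r₁,
      0 < d r ∧ 0 < u r ∧
      (k:ℝ) * deriv u r / r + μ * u r / r ^ 2 = u r ^ p) ∧
    Tendsto (fun r : ℝ => u r * r ^ (μ / (k:ℝ))) (nhdsWithin 0 (Ioi 0))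
      (nhds (c ^ (-(1 / (p - 1))))) := by
  have hp1 : (0:ℝ) < p - 1 := by linarith
  have hk0 : (0:ℝ) < (k:ℝ) := by
    have : (2:ℝ) ≤ (k:ℝ) := by exact_mod_cast hk
    linarith
  set α : ℝ := μ * (p - 1) / (k:ℝ) with hαdef
  set β : ℝ := 2 * (k:ℝ) / (p - 1) - μ with hβdef
  set q : ℝ := 1 / (p - 1) with hqdef
  have h1 : μ * (p - 1) < 2 * (k:ℝ) := by
    have := (div_lt_div_iff₀ hk0 hp1).mp hsub
    linarith
  have hα : 0 < α := by positivity
  have hβ : 0 < β := by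
    rw [hβdef, sub_pos, lt_div_iff₀ hp1]; linarith
  have hα2 : α < 2 := by
    rw [hαdef, div_lt_iff₀ hk0]; linarith
  have h2α : 0 < 2 - α := by linarith
  set r₀ : ℝ := (c * β) ^ ((2 - α)⁻¹) with hr₀def
  have hr₀ : 0 < r₀ := Real.rpow_pos_of_pos (mul_pos hc hβ) _
  set r₁ : ℝ := min (1/2) r₀ with hr₁def
  have hr₁0 : 0 < r₁ := lt_min (by norm_num) hr₀
  have hr₁1 : r₁ < 1 := lt_of_le_of_lt (min_le_left _ _) (by norm_num)
  -- main pointwise facts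
  have key : ∀ r ∈ Ioo (0:ℝ) r₁,
      0 < c - r ^ (2 - α) / β ∧ d r = r ^ α * (c - r ^ (2 - α) / β) := by
    rintro r ⟨hr, hrr⟩
    have hrr0 : r < r₀ := lt_of_lt_of_le hrr (min_le_right _ _)
    have hlt : r ^ (2 - α) < c * β := by
      calc r ^ (2 - α) < r₀ ^ (2 - α) := Real.rpow_lt_rpow hr.le hrr0 h2α
        _ = c * β := by
          rw [hr₀def, ← Real.rpow_mul (mul_pos hc hβ).le,
            inv_mul_cancel₀ h2α.ne', Real.rpow_one]
    constructor
    · rw [sub_pos, div_lt_iff₀ hβ]; linarith [hlt]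
    · rw [hd r, show r ^ (2:ℝ) = r ^ (2:ℕ) by
        rw [show (2:ℝ) = ((2:ℕ):ℝ) by norm_num, Real.rpow_natCast]]
      have hsplit : r ^ α * r ^ (2 - α) = r ^ (2:ℕ) := by
        rw [show r ^ (2:ℕ) = r ^ (2:ℝ) by
          rw [show (2:ℝ) = ((2:ℕ):ℝ) by norm_num, Real.rpow_natCast],
          ← Real.rpow_add hr]
        ring_nf
      field_simp
      linear_combination hsplit
  refine ⟨⟨r₁, ⟨hr₁0, hr₁1⟩, ?_⟩, ?_⟩
  · rintro r hrmem
    obtain ⟨hg, hfac⟩ := key r hrmem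
    obtain ⟨hr, hrr⟩ := hrmem
    have hdpos : 0 < d r := by
      rw [hfac]; exact mul_pos (Real.rpow_pos_of_pos hr _) hg
    have hupos : 0 < u r := by
      rw [hu r]; exact Real.rpow_pos_of_pos hdpos _
    refine ⟨hdpos, hupos, ?_⟩
    -- derivative of d
    have hdd : HasDerivAt d (c * (α * r ^ (α - 1)) - 2 * r ^ ((2:ℝ) - 1) / β) r := by
      have h1' : HasDerivAt (fun r : ℝ => c * r ^ α) (c * (α * r ^ (α - 1))) r :=
        (Real.hasDerivAt_rpow_const (Or.inl hr.ne')).const_mul c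
      have h2' : HasDerivAt (fun r : ℝ => r ^ (2:ℝ) / β) (2 * r ^ ((2:ℝ) - 1) / β) r :=
        (Real.hasDerivAt_rpow_const (p := (2:ℝ)) (Or.inl hr.ne')).div_const β
      have := h1'.sub h2'
      have hfun : (fun r : ℝ => c * r ^ α - r ^ (2:ℝ) / β) = d := funext fun r => (hd r).symm
      rw [← hfun]; exact this
    have hud : HasDerivAt u
        ((c * (α * r ^ (α - 1)) - 2 * r ^ ((2:ℝ) - 1) / β) * (-q) * d r ^ (-q - 1)) r := by
      have := hdd.rpow_const (p := -q) (Or.inl hdpos.ne')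
      have hfun : (fun r : ℝ => d r ^ (-q)) = u := funext fun r => (hu r).symm
      rwa [hfun] at this
    rw [hud.deriv, hu r]
    have hrpow2 : r ^ (2:ℝ) = r ^ (2:ℕ) := by
      rw [show (2:ℝ) = ((2:ℕ):ℝ) by norm_num, Real.rpow_natCast]
    have hr21 : r ^ ((2:ℝ) - 1) = r := by norm_num
    have hrα1 : r ^ (α - 1) = r ^ α / r := by
      rw [Real.rpow_sub hr, Real.rpow_one]
    have hqp : -q - 1 = -q * p := by rw [hqdef]; field_simp; ring
    have hmid : d r ^ (-q) = d r ^ (-q * p) * d r := by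
      nth_rewrite 3 [← Real.rpow_one (d r)]
      rw [← Real.rpow_add hdpos]
      congr 1
      rw [hqdef]; field_simp; ring
    rw [← Real.rpow_mul hdpos.le, hqp, hmid, hr21, hrα1]
    have hne : (k:ℝ) * 2 - p * μ + μ ≠ 0 := by nlinarith [h1]
    have hiden : (k:ℝ) * ((c * (α * (r ^ α / r)) - 2 * r / β) * -q) / r
        + μ * d r / r ^ (2:ℕ) = 1 := by
      rw [hd r, hrpow2, hαdef, hβdef, hqdef]
      field_simp
      ring_nf
      field_simp [hne]
      have hne' : μ - μ * p + (k:ℝ) * 2 ≠ 0 := by nlinarith [h1]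
      linear_combination mul_inv_cancel₀ hne'
    linear_combination (d r ^ (-q * p)) * hiden
  · -- limit
    have hmem : Ioo (0:ℝ) r₁ ∈ nhdsWithin (0:ℝ) (Ioi 0) :=
      Ioo_mem_nhdsGT hr₁0
    have heq : (fun r : ℝ => (c - r ^ (2 - α) / β) ^ (-q))
        =ᶠ[nhdsWithin (0:ℝ) (Ioi 0)] (fun r : ℝ => u r * r ^ (μ / (k:ℝ))) := by
      filter_upwards [hmem] with r hrmem
      obtain ⟨hg, hfac⟩ := key r hrmem
      obtain ⟨hr, _⟩ := hrmem
      have hαq : α * (-q) = -(μ / (k:ℝ)) := by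
        rw [hαdef, hqdef]; field_simp
      have hone : r ^ (-(μ / (k:ℝ))) * r ^ (μ / (k:ℝ)) = 1 := by
        rw [← Real.rpow_add hr]; simp
      rw [hu r, hfac, Real.mul_rpow (Real.rpow_nonneg hr.le α) hg.le,
        ← Real.rpow_mul hr.le, hαq, mul_comm (r ^ (-(μ / (k:ℝ)))) _,
        mul_assoc, hone, mul_one]
    have t1 : Tendsto (fun r : ℝ => r ^ (2 - α)) (nhdsWithin (0:ℝ) (Ioi 0)) (nhds 0) := by
      have h := (Real.continuousAt_rpow_const 0 (2 - α) (Or.inr h2α.le)).tendsto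
      rw [Real.zero_rpow h2α.ne'] at h
      exact h.mono_left nhdsWithin_le_nhds
    have t2 : Tendsto (fun r : ℝ => c - r ^ (2 - α) / β) (nhdsWithin (0:ℝ) (Ioi 0))
        (nhds c) := by
      have h0 : Tendsto (fun r : ℝ => r ^ (2 - α) / β) (nhdsWithin (0:ℝ) (Ioi 0))
          (nhds 0) := by simpa using t1.div_const β
      simpa using (tendsto_const_nhds (x := c) (f := nhdsWithin (0:ℝ) (Ioi 0))).sub h0
    have t3 : Tendsto (fun r : ℝ => (c - r ^ (2 - α) / β) ^ (-q))
        (nhdsWithin (0:ℝ) (Ioi 0)) (nhds (c ^ (-q))) :=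
      ((Real.continuousAt_rpow_const c (-q) (Or.inl hc.ne')).tendsto).comp t2
    exact Tendsto.congr' heq t3
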